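/- For n = 3 and γ > 1, the inequality λ̂_3(γ) < λ̃_3(γ) holds if and only if 1 < γ < 3(13 + 4√10), where λ̂_3(γ) = 1 + 2(γ-1)/((γ+1)+√(8(γ-1))) and λ̃_3(γ) = 1 + (3/2)(1 - 1/γ). -/
import Mathlib


theorem stmt_7 (γ : ℝ) (hγ : 1 < γ) :
    (1 + 2 * (γ - 1) / ((γ + 1) + Real.sqrt (8 * (γ - 1)))
        < 1 + (3 / 2) * (1 - 1 / γ)) ↔
      γ < 3 * (13 + 4 * Real.sqrt 10) := by
  have hγ0 : 0 < γ := by linarith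
  set s := Real.sqrt (8 * (γ - 1)) with hsdef
  set t := Real.sqrt 10 with htdef
  have hs0 : 0 < s := Real.sqrt_pos.mpr (by linarith)
  have hs2 : s ^ 2 = 8 * (γ - 1) := Real.sq_sqrt (by linarith)
  have ht0 : (0:ℝ) ≤ t := Real.sqrt_nonneg 10
  have ht2 : t ^ 2 = 10 := Real.sq_sqrt (by norm_num)
  have hden : 0 < γ + 1 + s := by linarith
  have hrw : (3/2:ℝ) * (1 - 1/γ) = 3 * (γ - 1) / (2 * γ) := by
    field_simp
  have key : (1 + 2 * (γ - 1) / ((γ + 1) + s) < 1 + (3 / 2) * (1 - 1 / γ))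
      ↔ γ - 3 < 3 * s := by
    rw [add_lt_add_iff_left, hrw, div_lt_div_iff₀ hden (by positivity)]
    constructor
    · intro h
      nlinarith [mul_pos (sub_pos.mpr hγ) hs0]
    · intro h
      nlinarith [mul_pos (sub_pos.mpr hγ) hs0]
  rw [key]
  constructor
  · intro h
    by_contra hcon
    push_neg at hcon
    have h39 : 39 + 12 * t ≤ γ := by linarith
    have h12t : (36:ℝ) < 12 * t := by nlinarith
    have hpos : (0:ℝ) < γ - 3 := by linarith
    have hsq : (γ - 3) ^ 2 < (3 * s) ^ 2 := by nlinarith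
    nlinarith [mul_self_le_mul_self (by linarith : (0:ℝ) ≤ 12 * t) (by linarith : 12 * t ≤ γ - 39)]
  · intro h
    have h' : γ < 39 + 12 * t := by linarith
    rcases le_or_gt γ 3 with h3 | h3
    · linarith
    · have h12t : (36:ℝ) < 12 * t := by nlinarith
      have hsq : (γ - 3) ^ 2 < (3 * s) ^ 2 := by nlinarith
      nlinarith
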